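/- Let g : (0,1] → ℝ be nonnegative and measurable with ∫₀¹ g(x)² dx < ∞, and let α ≥ 1. Define f̂(x) = α·x^(α−1)·∫_x^1 y^(−α)·g(y) dy for x ∈ (0,1]. Then ∫₀¹ f̂(x)² dx ≤ (2α/(2α−1))² · ∫₀¹ g(x)² dx. -/

import Mathlib

open MeasureTheory Real Set ENNReal

lemma holder_sq' {X : Type*} [MeasurableSpace X] (μ : Measure X) (f h : X → ℝ≥0∞)
    (hf : AEMeasurable f μ) (hh : AEMeasurable h μ) :
    (∫⁻ a, f a * h a ∂μ) ^ 2 ≤ (∫⁻ a, f a ^ 2 ∂μ) * (∫⁻ a, h a ^ 2 ∂μ) := by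
  have hpq : (2:ℝ).HolderConjugate 2 := Real.HolderConjugate.two_two
  have H := ENNReal.lintegral_mul_le_Lp_mul_Lq μ hpq hf hh
  calc (∫⁻ a, f a * h a ∂μ) ^ 2
      ≤ ((∫⁻ a, f a ^ (2:ℝ) ∂μ) ^ (1/(2:ℝ)) * (∫⁻ a, h a ^ (2:ℝ) ∂μ) ^ (1/(2:ℝ))) ^ 2 := by
        exact pow_le_pow_left' (by simpa [Pi.mul_apply] using H) 2
    _ = (∫⁻ a, f a ^ 2 ∂μ) * (∫⁻ a, h a ^ 2 ∂μ) := by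
        rw [mul_pow, ← ENNReal.rpow_natCast (_ ^ (1/(2:ℝ))) 2,
          ← ENNReal.rpow_natCast (_ ^ (1/(2:ℝ))) 2,
          ← ENNReal.rpow_mul, ← ENNReal.rpow_mul]
        norm_num

/-- For nonnegative measurable `g` on `(0,1]` with `∫₀¹ g² < ∞` and `α ≥ 1`,
the αL* estimate `f̂(x) = α x^(α-1) ∫_x^1 y^(-α) g(y) dy` satisfies
`∫₀¹ f̂² ≤ (2α/(2α-1))² ∫₀¹ g²`. -/
theorem alphaL_competitive_convex
    (g : ℝ → ℝ) (α : ℝ) (hα : 1 ≤ α)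
    (hg_nonneg : ∀ x ∈ Set.Ioc (0 : ℝ) 1, 0 ≤ g x)
    (hg_meas : Measurable g)
    (hg_sq : ∫⁻ x in Set.Ioc (0 : ℝ) 1, ENNReal.ofReal ((g x) ^ 2) < ⊤) :
    (∫⁻ x in Set.Ioc (0 : ℝ) 1,
        ENNReal.ofReal ((α * x ^ (α - 1) * ∫ y in x..1, y ^ (-α) * g y) ^ 2))
      ≤ ENNReal.ofReal ((2 * α / (2 * α - 1)) ^ 2) *
          ∫⁻ x in Set.Ioc (0 : ℝ) 1, ENNReal.ofReal ((g x) ^ 2) := by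
  have hβ : (0:ℝ) < α - 1/2 := by linarith
  -- the weighted square of g
  set H : ℝ → ℝ≥0∞ := fun y => ENNReal.ofReal (y ^ (1/2 - α) * g y ^ 2) with hH
  set B : ℝ → ℝ≥0∞ := fun x => ∫⁻ y in Ioc x 1, H y with hB
  -- pointwise bound via Cauchy-Schwarz
  have key : ∀ x ∈ Ioc (0:ℝ) 1,
      ENNReal.ofReal ((α * x ^ (α - 1) * ∫ y in x..1, y ^ (-α) * g y) ^ 2)
        ≤ ENNReal.ofReal (α^2 / (α - 1/2)) * (ENNReal.ofReal (x ^ (α - 3/2)) * B x) := by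
    intro x hx
    obtain ⟨hx0, hx1⟩ := hx
    set F : ℝ≥0∞ := ∫⁻ y in Ioc x 1, ENNReal.ofReal (y ^ (-α) * g y) with hF
    have hc : 0 ≤ α * x ^ (α - 1) :=
      mul_nonneg (by linarith) (rpow_nonneg hx0.le _)
    -- rewrite the interval integral via the lower Lebesgue integral
    have hI : (∫ y in x..1, y ^ (-α) * g y) = F.toReal := by
      rw [intervalIntegral.integral_of_le hx1, hF,
        integral_eq_lintegral_of_nonneg_ae]
      · refine (ae_restrict_iff' measurableSet_Ioc).2 (ae_of_all _ fun y hy => ?_)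
        exact mul_nonneg (rpow_nonneg (hx0.trans hy.1).le _)
          (hg_nonneg y ⟨hx0.trans hy.1, hy.2⟩)
      · exact (Measurable.aestronglyMeasurable (by fun_prop))
    -- Cauchy-Schwarz for F
    have hsplit : F = ∫⁻ y in Ioc x 1,
        ENNReal.ofReal (y ^ (-(α/2) - 1/4)) * ENNReal.ofReal (y ^ (1/4 - α/2) * g y) := by
      rw [hF]
      refine setLIntegral_congr_fun measurableSet_Ioc (fun y hy => ?_)
      have hy0 : 0 < y := hx0.trans hy.1
      rw [← ENNReal.ofReal_mul (rpow_nonneg hy0.le _), ← mul_assoc,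
        ← Real.rpow_add hy0, show -(α/2) - 1/4 + (1/4 - α/2) = -α by ring]
    have hHolder : F ^ 2 ≤
        (∫⁻ y in Ioc x 1, ENNReal.ofReal (y ^ (-(α/2) - 1/4)) ^ 2) *
        (∫⁻ y in Ioc x 1, ENNReal.ofReal (y ^ (1/4 - α/2) * g y) ^ 2) := by
      rw [hsplit]
      exact holder_sq' _ _ _ (by fun_prop) (by fun_prop)
    -- identify the two factors
    have hfac1 : (∫⁻ y in Ioc x 1, ENNReal.ofReal (y ^ (-(α/2) - 1/4)) ^ 2)
        = ∫⁻ y in Ioc x 1, ENNReal.ofReal (y ^ (-α - 1/2)) := by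
      refine setLIntegral_congr_fun measurableSet_Ioc (fun y hy => ?_)
      have hy0 : 0 < y := hx0.trans hy.1
      rw [← ENNReal.ofReal_pow (rpow_nonneg hy0.le _),
        ← Real.rpow_natCast (y ^ (-(α/2) - 1/4)) 2, ← Real.rpow_mul hy0.le]
      congr 2
      push_cast
      ring
    have hfac2 : (∫⁻ y in Ioc x 1, ENNReal.ofReal (y ^ (1/4 - α/2) * g y) ^ 2)
        = B x := by
      rw [hB]
      refine setLIntegral_congr_fun measurableSet_Ioc (fun y hy => ?_)
      have hy0 : 0 < y := hx0.trans hy.1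
      rw [← ENNReal.ofReal_pow
        (mul_nonneg (rpow_nonneg hy0.le _) (hg_nonneg y ⟨hy0, hy.2⟩))]
      rw [hH]
      congr 1
      rw [mul_pow, ← Real.rpow_natCast (y ^ (1/4 - α/2)) 2, ← Real.rpow_mul hy0.le]
      congr 2
      push_cast
      ring
    -- bound the first factor
    have hA : (∫⁻ y in Ioc x 1, ENNReal.ofReal (y ^ (-α - 1/2)))
        ≤ ENNReal.ofReal (x ^ (1/2 - α) / (α - 1/2)) := by
      have hmem : (0:ℝ) ∉ Set.uIcc x 1 := by
        rw [Set.uIcc_of_le hx1]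
        intro h
        exact absurd h.1 (by linarith)
      have hint : IntervalIntegrable (fun y : ℝ => y ^ (-α - 1/2)) volume x 1 :=
        intervalIntegral.intervalIntegrable_rpow (Or.inr hmem)
      have hnn : 0 ≤ᵐ[volume.restrict (Ioc x 1)] fun y : ℝ => y ^ (-α - 1/2) := by
        refine (ae_restrict_iff' measurableSet_Ioc).2 (ae_of_all _ fun y hy => ?_)
        exact rpow_nonneg (hx0.trans hy.1).le _
      rw [← MeasureTheory.ofReal_integral_eq_lintegral_ofReal
        ((intervalIntegrable_iff_integrableOn_Ioc_of_le hx1).1 hint) hnn]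
      apply ENNReal.ofReal_le_ofReal
      rw [← intervalIntegral.integral_of_le hx1,
        integral_rpow (Or.inr ⟨fun h => by linarith [h], hmem⟩)]
      have h1 : (-α - 1/2 + 1) = -(α - 1/2) := by ring
      rw [h1, Real.one_rpow, div_neg, ← neg_div, neg_sub]
      have h2 : x ^ (-(α - 1/2)) = x ^ (1/2 - α) := by norm_num
      rw [h2]
      exact (div_le_div_iff_of_pos_right hβ).2 (sub_le_self _ zero_le_one)
    -- combine
    have hre : (α * x ^ (α-1))^2 * (x ^ (1/2-α) / (α-1/2)) = α^2/(α-1/2) * x ^ (α-3/2) := by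
      have hxx : x ^ (α-1) * x ^ (α-1) * x ^ (1/2-α) = x ^ (α-3/2) := by
        rw [← Real.rpow_add hx0, ← Real.rpow_add hx0]
        congr 1
        ring
      calc (α * x ^ (α-1))^2 * (x ^ (1/2-α) / (α-1/2))
          = α^2 * (x ^ (α-1) * x ^ (α-1) * x ^ (1/2-α)) / (α-1/2) := by ring
        _ = α^2/(α-1/2) * x ^ (α-3/2) := by rw [hxx]; ring
    rw [hI]
    calc ENNReal.ofReal ((α * x ^ (α-1) * F.toReal)^2)
        ≤ ENNReal.ofReal (α * x ^ (α-1)) ^ 2 * F ^ 2 := by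
          rw [mul_pow, ENNReal.ofReal_mul (sq_nonneg _), ENNReal.ofReal_pow hc,
            ENNReal.ofReal_pow ENNReal.toReal_nonneg]
          exact mul_le_mul_right (pow_le_pow_left' ENNReal.ofReal_toReal_le 2) _
      _ ≤ ENNReal.ofReal (α * x ^ (α-1)) ^ 2 *
            (ENNReal.ofReal (x ^ (1/2-α) / (α-1/2)) * B x) := by
          refine mul_le_mul_right (hHolder.trans ?_) _
          rw [hfac1, hfac2]
          exact mul_le_mul_left hA _
      _ = ENNReal.ofReal (α^2 / (α - 1/2)) * (ENNReal.ofReal (x ^ (α - 3/2)) * B x) := by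
          rw [← mul_assoc, ← ENNReal.ofReal_pow hc, ← ENNReal.ofReal_mul (sq_nonneg _), hre,
            ENNReal.ofReal_mul (div_nonneg (sq_nonneg α) hβ.le), mul_assoc]
  -- the Tonelli kernel
  set K : ℝ × ℝ → ℝ≥0∞ := fun p =>
    ({q : ℝ × ℝ | q.1 < q.2}.indicator
      (fun q => ENNReal.ofReal (q.1 ^ (α - 3/2)) * H q.2)) p with hK
  have hKmeas : Measurable K := by
    refine Measurable.indicator ?_ (measurableSet_lt measurable_fst measurable_snd)
    rw [hH]
    fun_prop
  have claim1 : ∀ x ∈ Ioc (0:ℝ) 1,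
      (∫⁻ y in Ioc (0:ℝ) 1, K (x, y)) = ENNReal.ofReal (x ^ (α - 3/2)) * B x := by
    intro x hx
    have heq : (fun y => K (x, y))
        = fun y => ENNReal.ofReal (x ^ (α - 3/2)) * (Ioi x).indicator H y := by
      funext y
      simp only [hK, Set.indicator_apply, mem_setOf_eq, mem_Ioi]
      by_cases h : x < y <;> simp [h]
    have hset : Ioi x ∩ Ioc (0:ℝ) 1 = Ioc x 1 := by
      ext y
      simp only [mem_inter_iff, mem_Ioi, mem_Ioc]
      exact ⟨fun ⟨h1, _, h3⟩ => ⟨h1, h3⟩, fun ⟨h1, h2⟩ => ⟨h1, hx.1.trans h1, h2⟩⟩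
    rw [heq, lintegral_const_mul' _ _ ENNReal.ofReal_ne_top,
      lintegral_indicator measurableSet_Ioi _, Measure.restrict_restrict measurableSet_Ioi,
      hset, hB]
  have claim2 : ∀ y ∈ Ioc (0:ℝ) 1,
      (∫⁻ x in Ioc (0:ℝ) 1, K (x, y))
        = ENNReal.ofReal (g y ^ 2) * ENNReal.ofReal (1 / (α - 1/2)) := by
    intro y hy
    have heq : (fun x => K (x, y))
        = fun x => (Iio y).indicator (fun x => ENNReal.ofReal (x ^ (α - 3/2))) x * H y := by
      funext x
      simp only [hK, Set.indicator_apply, mem_setOf_eq, mem_Iio]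
      by_cases h : x < y <;> simp [h]
    have hset : Iio y ∩ Ioc (0:ℝ) 1 = Ioo 0 y := by
      ext x
      simp only [mem_inter_iff, mem_Iio, mem_Ioc, mem_Ioo]
      exact ⟨fun ⟨h1, h2, _⟩ => ⟨h2, h1⟩, fun ⟨h1, h2⟩ => ⟨h2, h1, h2.le.trans hy.2⟩⟩
    have hval : (∫⁻ x in Ioc (0:ℝ) y, ENNReal.ofReal (x ^ (α - 3/2)))
        = ENNReal.ofReal (y ^ (α - 1/2) / (α - 1/2)) := by
      have hint : IntervalIntegrable (fun x : ℝ => x ^ (α - 3/2)) volume 0 y :=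
        intervalIntegral.intervalIntegrable_rpow' (by linarith)
      have hnn : 0 ≤ᵐ[volume.restrict (Ioc (0:ℝ) y)] fun x : ℝ => x ^ (α - 3/2) := by
        refine (ae_restrict_iff' measurableSet_Ioc).2 (ae_of_all _ fun x hx => ?_)
        exact rpow_nonneg hx.1.le _
      rw [← MeasureTheory.ofReal_integral_eq_lintegral_ofReal
        ((intervalIntegrable_iff_integrableOn_Ioc_of_le hy.1.le).1 hint) hnn]
      congr 1
      rw [← intervalIntegral.integral_of_le hy.1.le, integral_rpow (Or.inl (by linarith)),
        Real.zero_rpow (by intro h; linarith [h] : α - 3/2 + 1 ≠ 0), sub_zero,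
        show α - 3/2 + 1 = α - 1/2 by ring]
    rw [heq, lintegral_mul_const' _ _ (by rw [hH]; exact ENNReal.ofReal_ne_top),
      lintegral_indicator measurableSet_Iio _, Measure.restrict_restrict measurableSet_Iio,
      hset, MeasureTheory.restrict_Ioo_eq_restrict_Ioc, hval, hH]
    rw [← ENNReal.ofReal_mul (div_nonneg (rpow_nonneg hy.1.le _) hβ.le),
      ← ENNReal.ofReal_mul (sq_nonneg _)]
    congr 1
    have h1 : y ^ (α - 1/2) * y ^ (1/2 - α) = 1 := by
      rw [← Real.rpow_add hy.1, show α - 1/2 + (1/2 - α) = 0 by ring, Real.rpow_zero]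
    calc y ^ (α-1/2) / (α-1/2) * (y ^ (1/2-α) * g y ^ 2)
        = (y ^ (α-1/2) * y ^ (1/2-α)) * g y ^ 2 * (1/(α-1/2)) := by ring
      _ = g y ^ 2 * (1/(α-1/2)) := by rw [h1]; ring
  have hswap : (∫⁻ x in Ioc (0:ℝ) 1, ∫⁻ y in Ioc (0:ℝ) 1, K (x, y))
      = ∫⁻ y in Ioc (0:ℝ) 1, ∫⁻ x in Ioc (0:ℝ) 1, K (x, y) :=
    lintegral_lintegral_swap hKmeas.aemeasurable
  calc (∫⁻ x in Ioc (0:ℝ) 1,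
          ENNReal.ofReal ((α * x ^ (α - 1) * ∫ y in x..1, y ^ (-α) * g y) ^ 2))
      ≤ ∫⁻ x in Ioc (0:ℝ) 1,
          ENNReal.ofReal (α^2 / (α - 1/2)) * (ENNReal.ofReal (x ^ (α - 3/2)) * B x) :=
        lintegral_mono_ae ((ae_restrict_iff' measurableSet_Ioc).2 (ae_of_all _ key))
    _ = ENNReal.ofReal (α^2 / (α - 1/2)) *
          ∫⁻ x in Ioc (0:ℝ) 1, ENNReal.ofReal (x ^ (α - 3/2)) * B x :=
        lintegral_const_mul' _ _ ENNReal.ofReal_ne_top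
    _ = ENNReal.ofReal (α^2 / (α - 1/2)) *
          ∫⁻ x in Ioc (0:ℝ) 1, ∫⁻ y in Ioc (0:ℝ) 1, K (x, y) := by
        congr 1
        exact (setLIntegral_congr_fun measurableSet_Ioc
          (fun x hx => (claim1 x hx).symm))
    _ = ENNReal.ofReal (α^2 / (α - 1/2)) *
          ∫⁻ y in Ioc (0:ℝ) 1, ∫⁻ x in Ioc (0:ℝ) 1, K (x, y) := by rw [hswap]
    _ = ENNReal.ofReal (α^2 / (α - 1/2)) *
          ∫⁻ y in Ioc (0:ℝ) 1, ENNReal.ofReal (g y ^ 2) * ENNReal.ofReal (1 / (α - 1/2)) := by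
        congr 1
        exact setLIntegral_congr_fun measurableSet_Ioc claim2
    _ = ENNReal.ofReal (α^2 / (α - 1/2)) *
          ((∫⁻ y in Ioc (0:ℝ) 1, ENNReal.ofReal (g y ^ 2)) * ENNReal.ofReal (1 / (α - 1/2))) := by
        rw [lintegral_mul_const' _ _ ENNReal.ofReal_ne_top]
    _ = ENNReal.ofReal ((2 * α / (2 * α - 1)) ^ 2) *
          ∫⁻ x in Ioc (0:ℝ) 1, ENNReal.ofReal (g x ^ 2) := by
        rw [show ∀ a b c : ℝ≥0∞, a * (b * c) = a * c * b from fun a b c => by ring,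
          ← ENNReal.ofReal_mul (div_nonneg (sq_nonneg _) hβ.le)]
        congr 2
        rw [div_mul_div_comm, mul_one, div_pow]
        rw [div_eq_div_iff (ne_of_gt (mul_pos hβ hβ))
          (ne_of_gt (pow_pos (by linarith : (0:ℝ) < 2 * α - 1) 2))]
        ring
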